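/- The Klein bottle group B = ⟨a, b ∣ a b a⁻¹ b = 1⟩ is torsion-free: if x ∈ B and xⁿ = 1 for some positive integer n, then x = 1. -/

import Mathlib

/-- The single relator `a * b * a⁻¹ * b` of the Klein bottle group,
where `a = FreeGroup.of 0` and `b = FreeGroup.of 1`. -/
def kleinBottleRels : Set (FreeGroup (Fin 2)) :=
  {FreeGroup.of 0 * FreeGroup.of 1 * (FreeGroup.of 0)⁻¹ * FreeGroup.of 1}

/-- The Klein bottle group `B = ⟨a, b ∣ a b a⁻¹ b = 1⟩`. -/
abbrev KleinBottleGroup : Type := PresentedGroup kleinBottleRels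

/-- The generator `a` of the Klein bottle group. -/
def kleinA : KleinBottleGroup := PresentedGroup.of 0

/-- The generator `b` of the Klein bottle group. -/
def kleinB : KleinBottleGroup := PresentedGroup.of 1

lemma klein_rel : kleinA * kleinB * kleinA⁻¹ * kleinB = 1 := by
  have : (QuotientGroup.mk (FreeGroup.of 0 * FreeGroup.of 1 * (FreeGroup.of 0)⁻¹ * FreeGroup.of 1)
      : KleinBottleGroup) = 1 := by
    rw [QuotientGroup.eq_one_iff]
    exact Subgroup.subset_normalClosure rfl
  exact this

lemma klein_conj (m : ℤ) : kleinA * kleinB ^ m * kleinA⁻¹ = kleinB ^ (-m) := by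
  have h : kleinA * kleinB * kleinA⁻¹ = kleinB⁻¹ := by
    have := klein_rel
    group at this ⊢
    rw [mul_eq_one_iff_eq_inv] at this
    simpa [mul_assoc] using this
  calc kleinA * kleinB ^ m * kleinA⁻¹ = (kleinA * kleinB * kleinA⁻¹) ^ m := by
        rw [conj_zpow]
    _ = kleinB ^ (-m) := by rw [h]; group

lemma klein_conj' (m : ℤ) : kleinA⁻¹ * kleinB ^ m * kleinA = kleinB ^ (-m) := by
  have := klein_conj (-m)
  rw [neg_neg] at this
  rw [← this]
  group

lemma klein_comm (p : ℤ) : ∀ m : ℤ, ∃ m' : ℤ, kleinA ^ p * kleinB ^ m = kleinB ^ m' * kleinA ^ p := by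
  induction p using Int.induction_on with
  | zero => intro m; exact ⟨m, by simp⟩
  | succ p ih =>
    intro m
    obtain ⟨m', hm'⟩ := ih (-m)
    rw [zpow_natCast] at hm'
    refine ⟨m', ?_⟩
    have h1 : kleinA * kleinB ^ m = kleinB ^ (-m) * kleinA := by
      rw [← klein_conj m]; group
    calc kleinA ^ (p + 1 : ℤ) * kleinB ^ m = kleinA ^ p * (kleinA * kleinB ^ m) := by group
      _ = kleinA ^ p * (kleinB ^ (-m) * kleinA) := by rw [h1]
      _ = (kleinA ^ p * kleinB ^ (-m)) * kleinA := by group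
      _ = kleinB ^ m' * kleinA ^ p * kleinA := by rw [hm']
      _ = kleinB ^ m' * kleinA ^ (p + 1 : ℤ) := by group
  | pred p ih =>
    intro m
    obtain ⟨m', hm'⟩ := ih (-m)
    refine ⟨m', ?_⟩
    have h1 : kleinA⁻¹ * kleinB ^ m = kleinB ^ (-m) * kleinA⁻¹ := by
      rw [← klein_conj' m]; group
    calc kleinA ^ (-p - 1 : ℤ) * kleinB ^ m = kleinA ^ (-p : ℤ) * (kleinA⁻¹ * kleinB ^ m) := by group
      _ = kleinA ^ (-p : ℤ) * (kleinB ^ (-m) * kleinA⁻¹) := by rw [h1]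
      _ = (kleinA ^ (-p : ℤ) * kleinB ^ (-m)) * kleinA⁻¹ := by group
      _ = kleinB ^ m' * kleinA ^ (-p : ℤ) * kleinA⁻¹ := by rw [hm']
      _ = kleinB ^ m' * kleinA ^ (-p - 1 : ℤ) := by group

lemma klein_normal_form (x : KleinBottleGroup) :
    ∃ m p : ℤ, x = kleinB ^ m * kleinA ^ p := by
  have hx : x ∈ Subgroup.closure (Set.range (PresentedGroup.of (rels := kleinBottleRels))) := by
    rw [PresentedGroup.closure_range_of]; trivial
  induction hx using Subgroup.closure_induction with
  | mem y hy =>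
    obtain ⟨i, rfl⟩ := hy
    fin_cases i
    · exact ⟨0, 1, by simp [kleinA]⟩
    · exact ⟨1, 0, by simp [kleinB]⟩
  | one => exact ⟨0, 0, by simp⟩
  | mul y z _ _ hy hz =>
    obtain ⟨m, p, rfl⟩ := hy
    obtain ⟨m', p', rfl⟩ := hz
    obtain ⟨m'', hm''⟩ := klein_comm p m'
    exact ⟨m + m'', p + p', by rw [zpow_add, zpow_add]; calc
      kleinB ^ m * kleinA ^ p * (kleinB ^ m' * kleinA ^ p')
          = kleinB ^ m * (kleinA ^ p * kleinB ^ m') * kleinA ^ p' := by group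
      _ = kleinB ^ m * (kleinB ^ m'' * kleinA ^ p) * kleinA ^ p' := by rw [hm'']
      _ = kleinB ^ m * kleinB ^ m'' * (kleinA ^ p * kleinA ^ p') := by group⟩
  | inv y _ hy =>
    obtain ⟨m, p, rfl⟩ := hy
    obtain ⟨m'', hm''⟩ := klein_comm (-p) (-m)
    exact ⟨m'', -p, by rw [← hm'']; group⟩

/-- Homomorphism to `Multiplicative ℤ` detecting the exponent of `a`. -/
noncomputable def kleinPsi : KleinBottleGroup →* Multiplicative ℤ :=
  PresentedGroup.toGroup (f := fun i => if i = 0 then Multiplicative.ofAdd 1 else 1)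
    (by
      intro r hr
      rw [kleinBottleRels, Set.mem_singleton_iff] at hr
      subst hr
      simp)

/-- Homomorphism to `Equiv.Perm ℤ` sending `a` to negation and `b` to translation by 1. -/
noncomputable def kleinPhi : KleinBottleGroup →* Equiv.Perm ℤ :=
  PresentedGroup.toGroup (f := fun i => if i = 0 then Equiv.neg ℤ else Equiv.addRight 1)
    (by
      intro r hr
      rw [kleinBottleRels, Set.mem_singleton_iff] at hr
      subst hr
      ext x
      simp [Equiv.Perm.mul_apply, Equiv.Perm.inv_def, Equiv.neg_symm, Equiv.neg_apply])

lemma kleinPsi_a : kleinPsi kleinA = Multiplicative.ofAdd 1 := by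
  simp [kleinPsi, kleinA, PresentedGroup.toGroup.of]

lemma kleinPsi_b : kleinPsi kleinB = 1 := by
  simp [kleinPsi, kleinB, PresentedGroup.toGroup.of]

lemma kleinPhi_b : kleinPhi kleinB = Equiv.addRight 1 := by
  simp [kleinPhi, kleinB, PresentedGroup.toGroup.of]

/-- The Klein bottle group is torsion-free. -/
theorem kleinBottle_torsionFree (x : KleinBottleGroup) (n : ℕ) (hn : 0 < n)
    (hx : x ^ n = 1) : x = 1 := by
  obtain ⟨m, p, rfl⟩ := klein_normal_form x
  -- first, p = 0 via kleinPsi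
  have hψ : kleinPsi ((kleinB ^ m * kleinA ^ p) ^ n) = 1 := by rw [hx]; simp
  rw [map_pow, map_mul, map_zpow, map_zpow, kleinPsi_a, kleinPsi_b] at hψ
  have hp : p = 0 := by
    have : Multiplicative.ofAdd ((n : ℤ) * p) = 1 := by
      rw [← hψ]; simp [← ofAdd_zsmul, mul_comm]
    have h0 : (n : ℤ) * p = 0 := by exact_mod_cast Multiplicative.ofAdd.injective this
    rcases mul_eq_zero.mp h0 with h | h
    · exact absurd h (by exact_mod_cast hn.ne')
    · exact h
  subst hp
  simp only [zpow_zero, mul_one] at hx ⊢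
  -- now m = 0 via kleinPhi
  have hφ : kleinPhi ((kleinB ^ m) ^ n) = 1 := by rw [hx]; simp
  rw [map_pow, map_zpow, kleinPhi_b] at hφ
  have hm : m = 0 := by
    have h1 : ((Equiv.addRight (1:ℤ)) ^ m) ^ n = 1 := hφ
    rw [Equiv.zsmul_addRight, Equiv.nsmul_addRight] at h1
    have := congrArg (fun e : Equiv.Perm ℤ => e 0) h1
    simp at this
    rcases this with h | h
    · exact absurd h (by exact_mod_cast hn.ne')
    · exact h
  subst hm
  simp
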